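/- Second-order partial derivatives of the single-group marginal negative log-likelihood with respect to the random-effect variances: let Z be a real n × q matrix with columns z₁, …, z_q, let Λ be a symmetric positive definite n × n real matrix, let ξ ∈ ℝⁿ, and define Ω(γ) = Z·Diag(γ)·Zᵀ + Λ and L(γ) = (1/2) ξᵀ Ω(γ)^{-1} ξ + (1/2) log det Ω(γ). At any γ ∈ ℝ^q where Ω(γ) is positive definite, the second mixed partial derivative ∂²L/∂γ_j∂γ_k equals (ξᵀ Ω(γ)^{-1} z_j)(z_jᵀ Ω(γ)^{-1} z_k)(z_kᵀ Ω(γ)^{-1} ξ) − (1/2)(z_jᵀ Ω(γ)^{-1} z_k)² for all j, k ∈ {1, …, q}. -/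

import Mathlib

open Matrix

noncomputable section SDNLLaux

attribute [local instance] Matrix.linftyOpNormedAddCommGroup Matrix.linftyOpNormedSpace
  Matrix.linftyOpNormedRing Matrix.linftyOpNormedAlgebra

namespace SDNLL

variable {n q : ℕ}

/-- determinant as a continuous multilinear map in the rows -/
def detCM (n : ℕ) : ContinuousMultilinearMap ℝ (fun _ : Fin n => (Fin n → ℝ)) ℝ :=
  MultilinearMap.mkContinuous
    ((Matrix.detRowAlternating : (Fin n → ℝ) [⋀^Fin n]→ₗ[ℝ] ℝ).toMultilinearMap)
    (n.factorial) (by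
      intro m
      have hdet : (Matrix.detRowAlternating.toMultilinearMap m : ℝ) = (Matrix.of m).det := rfl
      rw [hdet, Matrix.det_apply]
      refine (norm_sum_le _ _).trans ?_
      have hterm : ∀ σ : Equiv.Perm (Fin n),
          ‖Equiv.Perm.sign σ • ∏ i, Matrix.of m (σ i) i‖ ≤ ∏ i, ‖m i‖ := by
        intro σ
        have h1 : ‖Equiv.Perm.sign σ • ∏ i, Matrix.of m (σ i) i‖ = ‖∏ i, m (σ i) i‖ := by
          rcases Int.units_eq_one_or (Equiv.Perm.sign σ) with h | h <;>
            simp [h, norm_neg, Matrix.of_apply]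
        rw [h1]
        calc ‖∏ i, m (σ i) i‖ = ∏ i, ‖m (σ i) i‖ := by
              simp [Real.norm_eq_abs, Finset.abs_prod]
          _ ≤ ∏ i, ‖m (σ i)‖ := Finset.prod_le_prod (fun _ _ => norm_nonneg _)
              (fun i _ => norm_le_pi_norm (m (σ i)) i)
          _ = ∏ i, ‖m i‖ := Equiv.prod_comp σ (fun i => ‖m i‖)
      calc ∑ σ : Equiv.Perm (Fin n), ‖Equiv.Perm.sign σ • ∏ i, Matrix.of m (σ i) i‖
          ≤ (Finset.univ : Finset (Equiv.Perm (Fin n))).card • (∏ i, ‖m i‖) :=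
            Finset.sum_le_card_nsmul _ _ _ (fun σ _ => hterm σ)
        _ = (n.factorial : ℝ) * ∏ i, ‖m i‖ := by
            simp [Finset.card_univ, Fintype.card_perm, nsmul_eq_mul]
        _ ≤ (n.factorial : ℝ) * ∏ i, ‖m i‖ := le_rfl)

lemma detCM_apply (A : Matrix (Fin n) (Fin n) ℝ) : detCM n (fun i => A i) = A.det := rfl

lemma detCM_update (A : Matrix (Fin n) (Fin n) ℝ) (i : Fin n) (r : Fin n → ℝ) :
    detCM n (Function.update (fun i => A i) i r) = (A.updateRow i r).det := rfl

/-- the linear part of `γ ↦ Ω(γ)` -/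
def Dl (Z : Matrix (Fin n) (Fin q) ℝ) : (Fin q → ℝ) →L[ℝ] Matrix (Fin n) (Fin n) ℝ :=
  LinearMap.toContinuousLinearMap
  { toFun := fun H => Z * Matrix.diagonal H * Zᵀ
    map_add' := fun a b => by
      have h : Matrix.diagonal (a + b) = Matrix.diagonal a + Matrix.diagonal b := by
        ext i j; by_cases h : i = j <;> simp [h]
      simp only [h, Matrix.mul_add, Matrix.add_mul]
    map_smul' := fun c a => by
      simp only [Matrix.diagonal_smul, Matrix.mul_smul, Matrix.smul_mul, RingHom.id_apply] }

lemma Dl_apply (Z : Matrix (Fin n) (Fin q) ℝ) (H : Fin q → ℝ) :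
    Dl Z H = Z * Matrix.diagonal H * Zᵀ := rfl

def Om (Z : Matrix (Fin n) (Fin q) ℝ) (Λ : Matrix (Fin n) (Fin n) ℝ) (γ : Fin q → ℝ) :
    Matrix (Fin n) (Fin n) ℝ := Z * Matrix.diagonal γ * Zᵀ + Λ

lemma hasFDerivAt_Om (Z : Matrix (Fin n) (Fin q) ℝ) (Λ : Matrix (Fin n) (Fin n) ℝ)
    (γ : Fin q → ℝ) : HasFDerivAt (Om Z Λ) (Dl Z) γ := by
  have h : Om Z Λ = fun γ => Dl Z γ + Λ := rfl
  rw [h]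
  exact ((Dl Z).hasFDerivAt).add_const Λ

lemma Dl_single (Z : Matrix (Fin n) (Fin q) ℝ) (j : Fin q) :
    Dl Z (Pi.single j 1) = vecMulVec (Zᵀ j) (Zᵀ j) := by
  rw [Dl_apply]
  ext a b
  rw [Matrix.mul_apply]
  simp [Matrix.mul_diagonal, Pi.single_apply, Matrix.vecMulVec_apply, ite_mul,
    Finset.sum_ite_eq', mul_comm]


/-- evaluation `A ↦ a ⬝ᵥ A *ᵥ b` as a continuous linear map -/
def ev (a b : Fin n → ℝ) : Matrix (Fin n) (Fin n) ℝ →L[ℝ] ℝ :=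
  LinearMap.toContinuousLinearMap
  { toFun := fun A => a ⬝ᵥ (A *ᵥ b)
    map_add' := fun A B => by simp only [Matrix.add_mulVec, dotProduct_add]
    map_smul' := fun c A => by
      simp only [Matrix.smul_mulVec, dotProduct_smul, smul_eq_mul, RingHom.id_apply] }

lemma ev_apply (a b : Fin n → ℝ) (A : Matrix (Fin n) (Fin n) ℝ) :
    ev a b A = a ⬝ᵥ (A *ᵥ b) := rfl

/-- row projection as a continuous linear map -/
def rowp (n : ℕ) (i : Fin n) : Matrix (Fin n) (Fin n) ℝ →L[ℝ] (Fin n → ℝ) :=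
  LinearMap.toContinuousLinearMap
  { toFun := fun A => A i
    map_add' := fun _ _ => rfl
    map_smul' := fun _ _ => rfl }

/-- derivative of `γ ↦ Ω(γ)⁻¹` -/
def invD (Z : Matrix (Fin n) (Fin q) ℝ) (Λ : Matrix (Fin n) (Fin n) ℝ) (γ : Fin q → ℝ) :
    (Fin q → ℝ) →L[ℝ] Matrix (Fin n) (Fin n) ℝ :=
  (-(ContinuousLinearMap.mulLeftRight ℝ _ ((Om Z Λ γ)⁻¹) ((Om Z Λ γ)⁻¹))).comp (Dl Z)

lemma invD_apply (Z : Matrix (Fin n) (Fin q) ℝ) (Λ : Matrix (Fin n) (Fin n) ℝ) (γ : Fin q → ℝ)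
    (H : Fin q → ℝ) :
    invD Z Λ γ H = -((Om Z Λ γ)⁻¹ * Dl Z H * (Om Z Λ γ)⁻¹) := by
  rfl

lemma hasFDerivAt_inv (Z : Matrix (Fin n) (Fin q) ℝ) (Λ : Matrix (Fin n) (Fin n) ℝ)
    (γ : Fin q → ℝ) (h : IsUnit (Om Z Λ γ)) :
    HasFDerivAt (fun γ' => (Om Z Λ γ')⁻¹) (invD Z Λ γ) γ := by
  have h1 : (fun γ' => (Om Z Λ γ')⁻¹) = (Ring.inverse ∘ Om Z Λ) := by
    funext γ'
    simp [Function.comp, Matrix.nonsing_inv_eq_ringInverse]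
  rw [h1]
  have h2 := (hasFDerivAt_ringInverse (𝕜 := ℝ) h.unit).comp γ (hasFDerivAt_Om Z Λ γ)
  have h3 : ((h.unit⁻¹ : (Matrix (Fin n) (Fin n) ℝ)ˣ) : Matrix (Fin n) (Fin n) ℝ)
      = (Om Z Λ γ)⁻¹ := by
    rw [Matrix.coe_units_inv, h.unit_spec]
  rw [h3] at h2
  exact h2

lemma vecMulVec_mulVec' (u v w : Fin n → ℝ) :
    vecMulVec u v *ᵥ w = (v ⬝ᵥ w) • u := by
  funext i
  simp [Matrix.mulVec, Matrix.vecMulVec_apply, dotProduct, Finset.mul_sum, mul_assoc,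
    mul_comm, mul_left_comm]

lemma ev_sandwich (a b u v : Fin n → ℝ) (A : Matrix (Fin n) (Fin n) ℝ) :
    a ⬝ᵥ ((A * vecMulVec u v * A) *ᵥ b) = (a ⬝ᵥ (A *ᵥ u)) * (v ⬝ᵥ (A *ᵥ b)) := by
  rw [← Matrix.mulVec_mulVec, ← Matrix.mulVec_mulVec, vecMulVec_mulVec',
    Matrix.mulVec_smul, dotProduct_smul, smul_eq_mul, mul_comm]

lemma dot_swap {M : Matrix (Fin n) (Fin n) ℝ} (hM : Mᵀ = M) (a b : Fin n → ℝ) :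
    a ⬝ᵥ (M *ᵥ b) = b ⬝ᵥ (M *ᵥ a) := by
  nth_rewrite 1 [← hM]
  rw [Matrix.mulVec_transpose, dotProduct_comm, Matrix.dotProduct_mulVec]

lemma sum_det_updateRow (A : Matrix (Fin n) (Fin n) ℝ) (u : Fin n → ℝ)
    (hA : A.det ≠ 0) (hs : Aᵀ = A) :
    ∑ i, (A.updateRow i (vecMulVec u u i)).det = A.det * (u ⬝ᵥ (A⁻¹ *ᵥ u)) := by
  have h1 : ∀ i, (vecMulVec u u) i = u i • u := by
    intro i; funext jj; simp [Matrix.vecMulVec_apply]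
  have h2 : ∑ i, (A.updateRow i (vecMulVec u u i)).det
      = ∑ i, u i * (A.updateRow i u).det := by
    refine Finset.sum_congr rfl fun i _ => ?_
    rw [h1 i, Matrix.det_updateRow_smul]
  rw [h2]
  have h3 : ∀ i, (A.updateRow i u).det = Matrix.cramer Aᵀ u i := fun i =>
    (Matrix.cramer_transpose_apply A u i).symm
  simp_rw [h3]
  have h4 : ∑ i, u i * Matrix.cramer Aᵀ u i = u ⬝ᵥ (Matrix.adjugate Aᵀ *ᵥ u) := by
    rw [← Matrix.cramer_eq_adjugate_mulVec]; rfl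
  rw [h4, hs]
  have h5 : Matrix.adjugate A = A.det • A⁻¹ := by
    rw [Matrix.inv_def, smul_smul, Ring.inverse_eq_inv', mul_inv_cancel₀ hA, one_smul]
  rw [h5, Matrix.smul_mulVec, dotProduct_smul, smul_eq_mul]


lemma Om_symm (Z : Matrix (Fin n) (Fin q) ℝ) {Λ : Matrix (Fin n) (Fin n) ℝ}
    (hΛs : Λᵀ = Λ) (γ : Fin q → ℝ) : (Om Z Λ γ)ᵀ = Om Z Λ γ := by
  simp [Om, Matrix.transpose_add, Matrix.transpose_mul, Matrix.diagonal_transpose,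
    Matrix.transpose_transpose, hΛs, Matrix.mul_assoc]

/-- derivative of `γ ↦ det Ω(γ)` -/
def detD (Z : Matrix (Fin n) (Fin q) ℝ) (Λ : Matrix (Fin n) (Fin n) ℝ) (γ : Fin q → ℝ) :
    (Fin q → ℝ) →L[ℝ] ℝ :=
  ∑ i : Fin n, ((detCM n).toContinuousLinearMap (fun r => Om Z Λ γ r) i) ∘L
    ((rowp n i).comp (Dl Z))

lemma hasFDerivAt_det (Z : Matrix (Fin n) (Fin q) ℝ) (Λ : Matrix (Fin n) (Fin n) ℝ)
    (γ : Fin q → ℝ) :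
    HasFDerivAt (fun γ' => (Om Z Λ γ').det) (detD Z Λ γ) γ := by
  have hg : ∀ i : Fin n, HasFDerivAt (fun γ' => Om Z Λ γ' i) ((rowp n i).comp (Dl Z)) γ :=
    fun i => ((rowp n i).hasFDerivAt).comp γ (hasFDerivAt_Om Z Λ γ)
  exact HasFDerivAt.multilinear_comp (detCM n) hg

lemma detD_single (Z : Matrix (Fin n) (Fin q) ℝ) (Λ : Matrix (Fin n) (Fin n) ℝ)
    (γ : Fin q → ℝ) (hd : (Om Z Λ γ).det ≠ 0) (hs : (Om Z Λ γ)ᵀ = Om Z Λ γ) (j : Fin q) :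
    detD Z Λ γ (Pi.single j 1)
      = (Om Z Λ γ).det * (Zᵀ j ⬝ᵥ ((Om Z Λ γ)⁻¹ *ᵥ Zᵀ j)) := by
  have h1 : detD Z Λ γ (Pi.single j 1)
      = ∑ i : Fin n, ((Om Z Λ γ).updateRow i (vecMulVec (Zᵀ j) (Zᵀ j) i)).det := by
    simp only [detD, ContinuousLinearMap.sum_apply, ContinuousLinearMap.comp_apply]
    refine Finset.sum_congr rfl fun i _ => ?_
    rw [show (rowp n i) (Dl Z (Pi.single j 1)) = vecMulVec (Zᵀ j) (Zᵀ j) i from by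
      rw [Dl_single]; rfl]
    rw [ContinuousMultilinearMap.toContinuousLinearMap_apply]
    exact detCM_update (Om Z Λ γ) i (vecMulVec (Zᵀ j) (Zᵀ j) i)
  rw [h1, sum_det_updateRow _ _ hd hs]

lemma inner_fderiv (Z : Matrix (Fin n) (Fin q) ℝ) {Λ : Matrix (Fin n) (Fin n) ℝ}
    (ξ : Fin n → ℝ) (hΛs : Λᵀ = Λ) (γ : Fin q → ℝ) (hd : 0 < (Om Z Λ γ).det) (j : Fin q) :
    fderiv ℝ
      (fun γ' : Fin q → ℝ =>
        (1 / 2 : ℝ) * (ξ ⬝ᵥ ((Z * Matrix.diagonal γ' * Zᵀ + Λ)⁻¹ *ᵥ ξ)) +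
          (1 / 2 : ℝ) * Real.log (Z * Matrix.diagonal γ' * Zᵀ + Λ).det) γ (Pi.single j 1)
    = (1 / 2 : ℝ) * (Zᵀ j ⬝ᵥ ((Om Z Λ γ)⁻¹ *ᵥ Zᵀ j)) -
        (1 / 2 : ℝ) * ((ξ ⬝ᵥ ((Om Z Λ γ)⁻¹ *ᵥ Zᵀ j)) * (Zᵀ j ⬝ᵥ ((Om Z Λ γ)⁻¹ *ᵥ ξ))) := by
  have hu : IsUnit (Om Z Λ γ) :=
    (Matrix.isUnit_iff_isUnit_det _).2 (isUnit_iff_ne_zero.2 hd.ne')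
  have h1 : HasFDerivAt (fun γ' => ξ ⬝ᵥ ((Om Z Λ γ')⁻¹ *ᵥ ξ)) ((ev ξ ξ).comp (invD Z Λ γ)) γ :=
    ((ev ξ ξ).hasFDerivAt).comp γ (hasFDerivAt_inv Z Λ γ hu)
  have h2 : HasFDerivAt (fun γ' => Real.log (Om Z Λ γ').det)
      (((Om Z Λ γ).det)⁻¹ • detD Z Λ γ) γ :=
    by have := (Real.hasDerivAt_log hd.ne').comp_hasFDerivAt γ (hasFDerivAt_det Z Λ γ); exact this
  have h := (h1.const_mul (1 / 2 : ℝ)).add (h2.const_mul (1 / 2 : ℝ))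
  have hfe : (fun γ' : Fin q → ℝ =>
        (1 / 2 : ℝ) * (ξ ⬝ᵥ ((Z * Matrix.diagonal γ' * Zᵀ + Λ)⁻¹ *ᵥ ξ)) +
          (1 / 2 : ℝ) * Real.log (Z * Matrix.diagonal γ' * Zᵀ + Λ).det)
      = (fun γ' => (1 / 2 : ℝ) * (ξ ⬝ᵥ ((Om Z Λ γ')⁻¹ *ᵥ ξ)) +
          (1 / 2 : ℝ) * Real.log (Om Z Λ γ').det) := rfl
  rw [hfe, (show HasFDerivAt (fun γ' => (1 / 2 : ℝ) * (ξ ⬝ᵥ ((Om Z Λ γ')⁻¹ *ᵥ ξ)) +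
    (1 / 2 : ℝ) * Real.log (Om Z Λ γ').det) _ γ from h).fderiv]
  have hinvd : invD Z Λ γ (Pi.single j 1)
      = -((Om Z Λ γ)⁻¹ * vecMulVec (Zᵀ j) (Zᵀ j) * (Om Z Λ γ)⁻¹) := by
    rw [invD_apply, Dl_single]
  rw [ContinuousLinearMap.add_apply, ContinuousLinearMap.smul_apply,
    ContinuousLinearMap.smul_apply, ContinuousLinearMap.smul_apply,
    ContinuousLinearMap.comp_apply, hinvd, detD_single Z Λ γ hd.ne' (Om_symm Z hΛs γ) j]
  rw [ev_apply, Matrix.neg_mulVec, dotProduct_neg, ev_sandwich]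
  field_simp
  simp only [smul_eq_mul]
  field_simp
  ring
end SDNLL

open SDNLL in
/-- Second-order partial derivatives of the single-group marginal negative
log-likelihood with respect to the random-effect variances: with
`Ω(γ) = Z·Diag(γ)·Zᵀ + Λ` positive definite at `γ₀` and
`L(γ) = (1/2) ξᵀ Ω(γ)⁻¹ ξ + (1/2) log det Ω(γ)`, the mixed partial
`∂²L/∂γⱼ∂γₖ` at `γ₀` equals
`(ξᵀ Ω⁻¹ zⱼ)(zⱼᵀ Ω⁻¹ zₖ)(zₖᵀ Ω⁻¹ ξ) − (1/2)(zⱼᵀ Ω⁻¹ zₖ)²`. -/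
theorem second_deriv_marginal_nll_wrt_variances {n q : ℕ}
    (Z : Matrix (Fin n) (Fin q) ℝ)
    (Λ : Matrix (Fin n) (Fin n) ℝ) (hΛ : Λ.PosDef)
    (ξ : Fin n → ℝ) (γ₀ : Fin q → ℝ)
    (hpos : (Z * Matrix.diagonal γ₀ * Zᵀ + Λ).PosDef)
    (j k : Fin q) :
    fderiv ℝ
      (fun γ : Fin q → ℝ =>
        fderiv ℝ
          (fun γ' : Fin q → ℝ =>
            (1 / 2 : ℝ) * (ξ ⬝ᵥ ((Z * Matrix.diagonal γ' * Zᵀ + Λ)⁻¹ *ᵥ ξ)) +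
              (1 / 2 : ℝ) * Real.log (Z * Matrix.diagonal γ' * Zᵀ + Λ).det)
          γ (Pi.single j 1))
      γ₀ (Pi.single k 1) =
    (ξ ⬝ᵥ ((Z * Matrix.diagonal γ₀ * Zᵀ + Λ)⁻¹ *ᵥ Zᵀ j)) *
        (Zᵀ j ⬝ᵥ ((Z * Matrix.diagonal γ₀ * Zᵀ + Λ)⁻¹ *ᵥ Zᵀ k)) *
        (Zᵀ k ⬝ᵥ ((Z * Matrix.diagonal γ₀ * Zᵀ + Λ)⁻¹ *ᵥ ξ)) -
      (1 / 2 : ℝ) * (Zᵀ j ⬝ᵥ ((Z * Matrix.diagonal γ₀ * Zᵀ + Λ)⁻¹ *ᵥ Zᵀ k)) ^ 2 := by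
  have hΛs : Λᵀ = Λ := by
    ext a b
    have h := congrFun (congrFun hΛ.1 a) b
    simpa [Matrix.conjTranspose_apply] using h
  have hd0 : 0 < (Om Z Λ γ₀).det := hpos.det_pos
  have hOms : (Om Z Λ γ₀)ᵀ = Om Z Λ γ₀ := Om_symm Z hΛs γ₀
  have hinvs : ((Om Z Λ γ₀)⁻¹)ᵀ = (Om Z Λ γ₀)⁻¹ := by
    rw [Matrix.transpose_nonsing_inv, hOms]
  have hu0 : IsUnit (Om Z Λ γ₀) :=
    (Matrix.isUnit_iff_isUnit_det _).2 (isUnit_iff_ne_zero.2 hd0.ne')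
  -- continuity of the determinant of Ω
  have hcdet : Continuous (fun γ => (Om Z Λ γ).det) :=
    continuous_iff_continuousAt.2 fun γ => (hasFDerivAt_det Z Λ γ).continuousAt
  have hev : ∀ᶠ γ in nhds γ₀, 0 < (Om Z Λ γ).det :=
    (isOpen_lt continuous_const hcdet).mem_nhds hd0
  set u : Fin q → Fin n → ℝ := fun i => Zᵀ i with hu
  set F : (Fin q → ℝ) → ℝ := fun γ =>
    (1 / 2 : ℝ) * (Zᵀ j ⬝ᵥ ((Om Z Λ γ)⁻¹ *ᵥ Zᵀ j)) -
      (1 / 2 : ℝ) * ((ξ ⬝ᵥ ((Om Z Λ γ)⁻¹ *ᵥ Zᵀ j)) * (Zᵀ j ⬝ᵥ ((Om Z Λ γ)⁻¹ *ᵥ ξ))) with hF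
  have hEq : (fun γ : Fin q → ℝ =>
      fderiv ℝ
        (fun γ' : Fin q → ℝ =>
          (1 / 2 : ℝ) * (ξ ⬝ᵥ ((Z * Matrix.diagonal γ' * Zᵀ + Λ)⁻¹ *ᵥ ξ)) +
            (1 / 2 : ℝ) * Real.log (Z * Matrix.diagonal γ' * Zᵀ + Λ).det)
        γ (Pi.single j 1)) =ᶠ[nhds γ₀] F := by
    filter_upwards [hev] with γ hγ
    exact inner_fderiv Z ξ hΛs γ hγ j
  rw [hEq.fderiv_eq]
  -- derivative of F
  have hW : ∀ a b : Fin n → ℝ, HasFDerivAt (fun γ => a ⬝ᵥ ((Om Z Λ γ)⁻¹ *ᵥ b))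
      ((ev a b).comp (invD Z Λ γ₀)) γ₀ :=
    fun a b => ((ev a b).hasFDerivAt).comp γ₀ (hasFDerivAt_inv Z Λ γ₀ hu0)
  have hFd : HasFDerivAt F
      ((1 / 2 : ℝ) • ((ev (Zᵀ j) (Zᵀ j)).comp (invD Z Λ γ₀)) -
        (1 / 2 : ℝ) • ((ξ ⬝ᵥ ((Om Z Λ γ₀)⁻¹ *ᵥ Zᵀ j)) • ((ev (Zᵀ j) ξ).comp (invD Z Λ γ₀)) +
          (Zᵀ j ⬝ᵥ ((Om Z Λ γ₀)⁻¹ *ᵥ ξ)) • ((ev ξ (Zᵀ j)).comp (invD Z Λ γ₀)))) γ₀ := by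
    exact ((hW (Zᵀ j) (Zᵀ j)).const_mul (1 / 2 : ℝ)).sub
      (((hW ξ (Zᵀ j)).mul (hW (Zᵀ j) ξ)).const_mul (1 / 2 : ℝ))
  rw [hFd.fderiv]
  have hinvd : invD Z Λ γ₀ (Pi.single k 1)
      = -((Om Z Λ γ₀)⁻¹ * vecMulVec (Zᵀ k) (Zᵀ k) * (Om Z Λ γ₀)⁻¹) := by
    rw [invD_apply, Dl_single]
  rw [ContinuousLinearMap.sub_apply, ContinuousLinearMap.smul_apply,
    ContinuousLinearMap.smul_apply, ContinuousLinearMap.add_apply,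
    ContinuousLinearMap.smul_apply, ContinuousLinearMap.smul_apply,
    ContinuousLinearMap.comp_apply, ContinuousLinearMap.comp_apply,
    ContinuousLinearMap.comp_apply, hinvd]
  simp only [ev_apply, Matrix.neg_mulVec, dotProduct_neg, ev_sandwich, smul_eq_mul]
  have s1 : Zᵀ k ⬝ᵥ ((Om Z Λ γ₀)⁻¹ *ᵥ Zᵀ j) = Zᵀ j ⬝ᵥ ((Om Z Λ γ₀)⁻¹ *ᵥ Zᵀ k) :=
    dot_swap hinvs _ _
  have s2 : Zᵀ j ⬝ᵥ ((Om Z Λ γ₀)⁻¹ *ᵥ ξ) = ξ ⬝ᵥ ((Om Z Λ γ₀)⁻¹ *ᵥ Zᵀ j) :=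
    dot_swap hinvs _ _
  have s3 : ξ ⬝ᵥ ((Om Z Λ γ₀)⁻¹ *ᵥ Zᵀ k) = Zᵀ k ⬝ᵥ ((Om Z Λ γ₀)⁻¹ *ᵥ ξ) :=
    dot_swap hinvs _ _
  show _ = (ξ ⬝ᵥ ((Om Z Λ γ₀)⁻¹ *ᵥ Zᵀ j)) * (Zᵀ j ⬝ᵥ ((Om Z Λ γ₀)⁻¹ *ᵥ Zᵀ k)) *
      (Zᵀ k ⬝ᵥ ((Om Z Λ γ₀)⁻¹ *ᵥ ξ)) -
    (1 / 2 : ℝ) * (Zᵀ j ⬝ᵥ ((Om Z Λ γ₀)⁻¹ *ᵥ Zᵀ k)) ^ 2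
  rw [s1, s2, s3]
  ring

end SDNLLaux
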